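/- arXiv:1608.02504 — 3 statements merged into one kernel-verified Lean document; each statement's English description precedes it below -/
import Mathlib

section
/- Let 𝔤 be a finite-dimensional Lie algebra over a field k of characteristic zero and r ∈ 𝔤 ∧ 𝔤 an r-matrix (skew-symmetric solution of CYB(r) = 0). Then the set 𝔥_r = {(f ⊗ 1)(r) | f ∈ 𝔤*} is a Lie subalgebra of 𝔤, r lies in 𝔥_r ∧ 𝔥_r, and r is non-degenerate as an element of 𝔥_r ∧ 𝔥_r (i.e. the induced map 𝔥_r* → 𝔥_r, f ↦ (f⊗1)r, is bijective). -/
open scoped TensorProduct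

/-- The Etingof–Schiffmann set `𝔥_r = {(f ⊗ 1)(r) | f ∈ 𝔤*}` associated to an element
`r ∈ 𝔤 ⊗ 𝔤`. -/
noncomputable def esRange (k : Type*) [Field k] {L : Type*} [AddCommGroup L] [Module k L]
    (r : L ⊗[k] L) : Set L :=
  Set.range fun f : Module.Dual k L =>
    (TensorProduct.lid k L) ((TensorProduct.map f LinearMap.id) r)

section helpers

variable {k : Type*} [Field k] {L : Type*} [AddCommGroup L] [Module k L]

/-- The linear map `𝔤* → 𝔤`, `f ↦ (f ⊗ 1) r`. -/
noncomputable def esMap (r : L ⊗[k] L) : Module.Dual k L →ₗ[k] L where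
  toFun f := TensorProduct.lid k L (TensorProduct.map f LinearMap.id r)
  map_add' f g := by
    show TensorProduct.lid k L (TensorProduct.map (f + g) LinearMap.id r) = _
    rw [TensorProduct.map_add_left, LinearMap.add_apply, map_add]
  map_smul' c f := by
    show TensorProduct.lid k L (TensorProduct.map (c • f) LinearMap.id r) = _
    rw [TensorProduct.map_smul_left, LinearMap.smul_apply, map_smul]
    rfl

lemma esMap_apply (r : L ⊗[k] L) (f : Module.Dual k L) :
    esMap r f = TensorProduct.lid k L (TensorProduct.map f LinearMap.id r) := rfl

lemma rep_lemma {ι : Type*} [Fintype ι] (b : Module.Basis ι k L) (t : L ⊗[k] L) :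
    t = ∑ i, b i ⊗ₜ[k]
      (TensorProduct.lid k L (TensorProduct.map (b.coord i) LinearMap.id t)) := by
  induction t using TensorProduct.induction_on with
  | zero => simp
  | tmul a c =>
    simp only [TensorProduct.map_tmul, LinearMap.id_coe, id_eq, TensorProduct.lid_tmul,
      TensorProduct.tmul_smul, ← TensorProduct.smul_tmul', Module.Basis.coord_apply]
    conv_lhs => rw [← b.sum_repr a]
    rw [TensorProduct.sum_tmul]
    simp [TensorProduct.smul_tmul']
  | add x y hx hy =>
    conv_lhs => rw [hx, hy]
    simp only [map_add, TensorProduct.tmul_add]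
    rw [← Finset.sum_add_distrib]

lemma lie_finset_sum {R L : Type*} [CommRing R] [LieRing L] [LieAlgebra R L]
    {α : Type*} (s : Finset α) (x : L) (f : α → L) :
    ⁅x, ∑ i ∈ s, f i⁆ = ∑ i ∈ s, ⁅x, f i⁆ := by
  calc ⁅x, ∑ i ∈ s, f i⁆ = (LieAlgebra.ad R L x) (∑ i ∈ s, f i) := by
        rw [LieAlgebra.ad_apply]
    _ = ∑ i ∈ s, (LieAlgebra.ad R L x) (f i) := map_sum _ _ _
    _ = ∑ i ∈ s, ⁅x, f i⁆ := by simp [LieAlgebra.ad_apply]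

lemma finset_sum_lie {R L : Type*} [CommRing R] [LieRing L] [LieAlgebra R L]
    {α : Type*} (s : Finset α) (f : α → L) (y : L) :
    ⁅∑ i ∈ s, f i, y⁆ = ∑ i ∈ s, ⁅f i, y⁆ := by
  rw [← lie_skew, lie_finset_sum (R := R), ← Finset.sum_neg_distrib]
  exact Finset.sum_congr rfl fun i _ => lie_skew _ _

end helpers

/-- For an `r`-matrix `r` on a finite-dimensional Lie algebra `𝔤`, the set
`𝔥_r = {(f⊗1)r | f ∈ 𝔤*}` is a Lie subalgebra of `𝔤`, the element `r` lies in
`𝔥_r ∧ 𝔥_r`, and `r` is non-degenerate there: the induced map `𝔥_r* → 𝔥_r`,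
`f ↦ (f⊗1)r`, is injective (and surjective by definition of `𝔥_r`). -/
theorem etingof_schiffmann_subalgebra
    {k : Type*} [Field k] [CharZero k]
    {L : Type*} [LieRing L] [LieAlgebra k L] [FiniteDimensional k L]
    (r : L ⊗[k] L)
    (hskew : (TensorProduct.comm k L L) r = - r)
    (C : L ⊗[k] L →ₗ[k] L ⊗[k] L →ₗ[k] L ⊗[k] (L ⊗[k] L))
    (hC : ∀ a b a' b' : L,
      C (a ⊗ₜ[k] b) (a' ⊗ₜ[k] b') =
        ⁅a, a'⁆ ⊗ₜ[k] (b ⊗ₜ[k] b') + a ⊗ₜ[k] (⁅b, a'⁆ ⊗ₜ[k] b') +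
          a ⊗ₜ[k] (a' ⊗ₜ[k] ⁅b, b'⁆))
    (hCYB : C r r = 0) :
    (∃ 𝔥 : LieSubalgebra k L, (𝔥 : Set L) = esRange k r) ∧
    (r ∈ Submodule.span k
      {t : L ⊗[k] L | ∃ a ∈ esRange k r, ∃ b ∈ esRange k r, t = a ⊗ₜ[k] b}) ∧
    (∀ f : Module.Dual k L,
      (TensorProduct.lid k L) ((TensorProduct.map f LinearMap.id) r) = 0 →
        ∀ y ∈ esRange k r, f y = 0) ∧
    (∀ y ∈ esRange k r, ∃ f : Module.Dual k L,
      (TensorProduct.lid k L) ((TensorProduct.map f LinearMap.id) r) = y) := by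
  classical
  obtain ⟨S, hS⟩ := TensorProduct.exists_finset r
  set Φ : Module.Dual k L →ₗ[k] L := esMap r with hΦdef
  have hrange : esRange k r = Set.range Φ := rfl
  have hΦapp : ∀ f : Module.Dual k L, Φ f = ∑ p ∈ S, f p.1 • p.2 := by
    intro f
    rw [hΦdef, esMap_apply]
    conv_lhs => rw [hS]
    rw [map_sum, map_sum]
    simp [TensorProduct.map_tmul, TensorProduct.lid_tmul]
  set H : Submodule k L := LinearMap.range Φ with hHdef
  have hHset : (H : Set L) = esRange k r := by
    rw [hrange, hHdef, LinearMap.coe_range]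
  -- skew pairing
  have hpair : ∀ f g : Module.Dual k L,
      ∑ p ∈ S, f p.2 * g p.1 = - ∑ p ∈ S, f p.1 * g p.2 := by
    intro f g
    have hl : TensorProduct.lid k k
        (TensorProduct.map f g ((TensorProduct.comm k L L) r)) = ∑ p ∈ S, f p.2 * g p.1 := by
      conv_lhs => rw [hS]
      simp only [map_sum]
      simp [TensorProduct.comm_tmul, TensorProduct.map_tmul, smul_eq_mul]
    have hr : TensorProduct.lid k k (TensorProduct.map f g (-r))
        = - ∑ p ∈ S, f p.1 * g p.2 := by
      rw [map_neg, map_neg, neg_inj]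
      conv_lhs => rw [hS]
      rw [map_sum, map_sum]
      simp [TensorProduct.map_tmul, smul_eq_mul]
    rw [← hl, ← hr, hskew]
  -- closure under bracket
  have hlie : ∀ x ∈ H, ∀ y ∈ H, ⁅x, y⁆ ∈ H := by
    rintro x ⟨f, rfl⟩ y ⟨g, rfl⟩
    set ψ : L ⊗[k] L →ₗ[k] L :=
      (TensorProduct.lid k L).toLinearMap ∘ₗ TensorProduct.map g LinearMap.id with hψ
    set Ψ : L ⊗[k] (L ⊗[k] L) →ₗ[k] L :=
      (TensorProduct.lid k L).toLinearMap ∘ₗ TensorProduct.map f ψ with hΨ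
    have hΨt : ∀ (a x y : L), Ψ (a ⊗ₜ[k] (x ⊗ₜ[k] y)) = (f a * g x) • y := by
      intro a x y
      simp only [hΨ, hψ, LinearMap.coe_comp, LinearEquiv.coe_coe, Function.comp_apply,
        TensorProduct.map_tmul, TensorProduct.lid_tmul, LinearMap.id_coe, id_eq,
        map_smul, smul_smul]
    have hCrr : C r r = ∑ p ∈ S, ∑ q ∈ S, C (p.1 ⊗ₜ[k] p.2) (q.1 ⊗ₜ[k] q.2) := by
      conv_lhs => rw [hS]
      simp only [map_sum, LinearMap.sum_apply]
      exact Finset.sum_comm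
    have hexp : Ψ (C r r) =
        ((∑ p ∈ S, ∑ q ∈ S, (f ⁅p.1, q.1⁆ * g p.2) • q.2)
          + ∑ p ∈ S, ∑ q ∈ S, (f p.1 * g ⁅p.2, q.1⁆) • q.2)
          + ∑ p ∈ S, ∑ q ∈ S, (f p.1 * g q.1) • ⁅p.2, q.2⁆ := by
      rw [hCrr, map_sum]
      simp only [map_sum, hC, map_add, hΨt]
      simp only [Finset.sum_add_distrib]
    have h3 : ∑ p ∈ S, ∑ q ∈ S, (f p.1 * g q.1) • ⁅p.2, q.2⁆ = ⁅Φ f, Φ g⁆ := by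
      rw [hΦapp f, hΦapp g, finset_sum_lie (R := k)]
      refine Finset.sum_congr rfl fun p _ => ?_
      rw [smul_lie, lie_finset_sum (R := k), Finset.smul_sum]
      refine Finset.sum_congr rfl fun q _ => ?_
      rw [lie_smul, smul_smul]
    have h1 : ∑ p ∈ S, ∑ q ∈ S, (f ⁅p.1, q.1⁆ * g p.2) • q.2
        = Φ (∑ p ∈ S, g p.2 • (f ∘ₗ (LieAlgebra.ad k L p.1))) := by
      rw [map_sum]
      refine Finset.sum_congr rfl fun p _ => ?_
      rw [map_smul, hΦapp (f ∘ₗ LieAlgebra.ad k L p.1), Finset.smul_sum]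
      refine Finset.sum_congr rfl fun q _ => ?_
      simp [LieAlgebra.ad_apply, smul_smul, mul_comm]
    have h2 : ∑ p ∈ S, ∑ q ∈ S, (f p.1 * g ⁅p.2, q.1⁆) • q.2
        = Φ (∑ p ∈ S, f p.1 • (g ∘ₗ (LieAlgebra.ad k L p.2))) := by
      rw [map_sum]
      refine Finset.sum_congr rfl fun p _ => ?_
      rw [map_smul, hΦapp (g ∘ₗ LieAlgebra.ad k L p.2), Finset.smul_sum]
      refine Finset.sum_congr rfl fun q _ => ?_
      simp [LieAlgebra.ad_apply, smul_smul, mul_comm]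
    have hz : (Φ (∑ p ∈ S, g p.2 • (f ∘ₗ (LieAlgebra.ad k L p.1)))
        + Φ (∑ p ∈ S, f p.1 • (g ∘ₗ (LieAlgebra.ad k L p.2)))) + ⁅Φ f, Φ g⁆ = 0 := by
      rw [← h1, ← h2, ← h3, ← hexp, hCYB, map_zero]
    refine ⟨-((∑ p ∈ S, g p.2 • (f ∘ₗ (LieAlgebra.ad k L p.1)))
      + (∑ p ∈ S, f p.1 • (g ∘ₗ (LieAlgebra.ad k L p.2)))), ?_⟩
    rw [map_neg, map_add, eq_neg_of_add_eq_zero_left hz, neg_neg]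
  refine ⟨⟨⟨H, fun {x y} hx hy => hlie x hx y hy⟩, ?_⟩, ?_, ?_, ?_⟩
  · exact hHset
  · -- r ∈ span of pure tensors from esRange
    let b := Module.finBasis k L
    have hmem1 : ∀ i, TensorProduct.lid k L
        (TensorProduct.map (b.coord i) LinearMap.id r) ∈ H := fun i => ⟨b.coord i, rfl⟩
    obtain ⟨N, hN⟩ := Submodule.exists_isCompl H
    set prj : L →ₗ[k] L := H.subtype ∘ₗ Submodule.linearProjOfIsCompl H N hN with hprjdef
    have hpm : ∀ x : L, prj x ∈ H := fun x => (Submodule.linearProjOfIsCompl H N hN x).2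
    have hpf : ∀ x ∈ H, prj x = x := by
      intro x hx
      have h := Submodule.linearProjOfIsCompl_apply_left hN ⟨x, hx⟩
      show H.subtype (Submodule.linearProjOfIsCompl H N hN x) = x
      rw [show Submodule.linearProjOfIsCompl H N hN x = ⟨x, hx⟩ from h]
      rfl
    have step1 : TensorProduct.map LinearMap.id prj r = r := by
      conv_lhs => rw [rep_lemma b r]
      conv_rhs => rw [rep_lemma b r]
      rw [map_sum]
      refine Finset.sum_congr rfl fun i _ => ?_
      rw [TensorProduct.map_tmul, LinearMap.id_coe, id_eq, hpf _ (hmem1 i)]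
    have hcc : (TensorProduct.comm k L L) ((TensorProduct.comm k L L) r) = r := by
      rw [hskew, map_neg, hskew, neg_neg]
    have hmem2 : ∀ i, TensorProduct.lid k L (TensorProduct.map (b.coord i) LinearMap.id
        ((TensorProduct.comm k L L) r)) ∈ H := by
      intro i
      rw [hskew, map_neg, map_neg]
      exact H.neg_mem (hmem1 i)
    have step2 : TensorProduct.map prj LinearMap.id r = r := by
      conv_lhs => rw [← hcc]
      conv_rhs => rw [← hcc]
      rw [rep_lemma b ((TensorProduct.comm k L L) r)]
      simp only [map_sum]
      simp only [TensorProduct.comm_tmul, TensorProduct.map_tmul, LinearMap.id_coe, id_eq]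
      refine Finset.sum_congr rfl fun i _ => ?_
      rw [hpf _ (hmem2 i)]
    have hpp : TensorProduct.map prj prj r = r := by
      have hcomp : TensorProduct.map prj prj
          = (TensorProduct.map prj LinearMap.id) ∘ₗ (TensorProduct.map LinearMap.id prj) := by
        rw [← TensorProduct.map_comp, LinearMap.comp_id, LinearMap.id_comp]
      rw [hcomp, LinearMap.comp_apply, step1, step2]
    have hrepr : r = ∑ p ∈ S, (prj p.1) ⊗ₜ[k] (prj p.2) := by
      conv_lhs => rw [← hpp, hS]
      rw [map_sum]
      simp [TensorProduct.map_tmul]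
    have hsum : (∑ p ∈ S, prj p.1 ⊗ₜ[k] prj p.2) ∈ Submodule.span k
        {t : L ⊗[k] L | ∃ a ∈ esRange k r, ∃ b ∈ esRange k r, t = a ⊗ₜ[k] b} := by
      apply Submodule.sum_mem
      intro p hp
      have m1 : prj p.1 ∈ esRange k r := by rw [← hHset]; exact hpm p.1
      have m2 : prj p.2 ∈ esRange k r := by rw [← hHset]; exact hpm p.2
      exact Submodule.subset_span ⟨prj p.1, m1, prj p.2, m2, rfl⟩
    exact hrepr.symm ▸ hsum
  · intro f hf y hy
    obtain ⟨g, hg⟩ := hy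
    have hΦf : Φ f = 0 := hf
    have hy' : Φ g = y := hg
    have h1 : ∑ p ∈ S, f p.1 * g p.2 = 0 := by
      have h := congrArg g hΦf
      rw [hΦapp] at h
      simpa [map_sum, smul_eq_mul, mul_comm] using h
    have h2 : f y = ∑ p ∈ S, g p.1 * f p.2 := by
      rw [← hy', hΦapp]
      simp [smul_eq_mul, mul_comm]
    rw [h2]
    calc ∑ p ∈ S, g p.1 * f p.2 = ∑ p ∈ S, f p.2 * g p.1 :=
          Finset.sum_congr rfl fun p _ => mul_comm _ _
      _ = - ∑ p ∈ S, f p.1 * g p.2 := hpair f g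
      _ = 0 := by rw [h1, neg_zero]
  · rintro y ⟨f, hf⟩
    exact ⟨f, hf⟩
end

section
/- Let 𝔤 be a complex semisimple Lie algebra. Then there exists no non-degenerate r-matrix on 𝔤: every skew-symmetric solution r ∈ 𝔤 ∧ 𝔤 of the classical Yang–Baxter equation determines a degenerate 2-form. Equivalently, the skew-symmetric bilinear form ω(x,y) = f([x,y]) associated to any linear functional f ∈ 𝔤* is degenerate. -/
open LieAlgebra LinearMap

attribute [local instance] LieRing.ofAssociativeRing

/-- On a semisimple Lie algebra, the derived algebra is everything. -/
lemma aux_lie_top_top_eq_top {L : Type*} [LieRing L] [LieAlgebra ℂ L]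
    [LieAlgebra.IsSemisimple ℂ L] :
    (⁅(⊤ : LieIdeal ℂ L), (⊤ : LieIdeal ℂ L)⁆ : LieIdeal ℂ L) = ⊤ := by
  have h : sSup {I : LieIdeal ℂ L | IsAtom I} ≤
      ⁅(⊤ : LieIdeal ℂ L), (⊤ : LieIdeal ℂ L)⁆ := by
    apply sSup_le
    intro I hI
    calc I = ⁅I, I⁆ :=
          (lie_eq_self_of_isAtom_of_nonabelian I hI
          (LieAlgebra.IsSemisimple.non_abelian_of_isAtom I hI)).symm
      _ ≤ ⁅(⊤ : LieIdeal ℂ L), (⊤ : LieIdeal ℂ L)⁆ := LieSubmodule.mono_lie le_top le_top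
  exact le_antisymm le_top
    (LieAlgebra.IsSemisimple.sSup_atoms_eq_top (R := ℂ) (L := L) ▸ h)

/-- On a semisimple Lie algebra every `ad` is traceless (unimodularity). -/
lemma aux_trace_ad_eq_zero {L : Type*} [LieRing L] [LieAlgebra ℂ L] [FiniteDimensional ℂ L]
    [LieAlgebra.IsSemisimple ℂ L] (z : L) :
    LinearMap.trace ℂ L (LieAlgebra.ad ℂ L z) = 0 := by
  have hz : z ∈ Submodule.span ℂ
      {m : L | ∃ x ∈ (⊤ : LieIdeal ℂ L), ∃ n ∈ (⊤ : LieIdeal ℂ L), ⁅x, n⁆ = m} := by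
    rw [← LieSubmodule.lieIdeal_oper_eq_linear_span', aux_lie_top_top_eq_top]
    simp
  induction hz using Submodule.span_induction with
  | mem m hm =>
      obtain ⟨x, -, y, -, rfl⟩ := hm
      have : LieAlgebra.ad ℂ L ⁅x, y⁆ = (LieAlgebra.ad ℂ L x) * (LieAlgebra.ad ℂ L y)
          - (LieAlgebra.ad ℂ L y) * (LieAlgebra.ad ℂ L x) := by
        rw [LieHom.map_lie]; rfl
      rw [this, map_sub, LinearMap.trace_mul_comm, sub_self]
  | zero => simp
  | add a b _ _ ha hb => rw [map_add, map_add, ha, hb, add_zero]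
  | smul c a _ ha => rw [map_smul, map_smul, ha, smul_zero]

/-- On a (nontrivial, finite-dimensional) complex semisimple Lie algebra there is no
non-degenerate triangular structure: the skew-symmetric bilinear form
`ω(x,y) = f([x,y])` associated to any linear functional `f ∈ 𝔤*` (which by
Whitehead's lemma exhausts all 2-cocycles, i.e. all candidate inverses of
non-degenerate r-matrices) is degenerate. -/
theorem no_nondegenerate_r_matrix_on_semisimple
    {L : Type*} [LieRing L] [LieAlgebra ℂ L] [FiniteDimensional ℂ L]
    [LieAlgebra.IsSemisimple ℂ L] [Nontrivial L]
    (f : Module.Dual ℂ L) :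
    ∃ z : L, z ≠ 0 ∧ ∀ x : L, f ⁅x, z⁆ = 0 := by
  by_contra hcon
  push_neg at hcon
  -- the linear map `z ↦ f ⁅z, ·⁆`
  set T : L →ₗ[ℂ] Module.Dual ℂ L :=
    (LinearMap.llcomp ℂ L L ℂ f).comp (LieAlgebra.ad ℂ L).toLinearMap with hT
  have hTapp : ∀ z x : L, T z x = f ⁅z, x⁆ := fun z x => rfl
  -- `T` is injective
  have hinj : Function.Injective T := by
    rw [← LinearMap.ker_eq_bot, eq_bot_iff]
    intro z hz
    simp only [LinearMap.mem_ker] at hz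
    by_contra hz0
    obtain ⟨x, hx⟩ := hcon z (by simpa using hz0)
    apply hx
    have : T z x = 0 := by rw [hz]; rfl
    rw [hTapp] at this
    rw [← lie_skew, map_neg, this, neg_zero]
  -- hence surjective, giving a "principal element" `p`
  have hsurj : Function.Surjective T :=
    (LinearMap.injective_iff_surjective_of_finrank_eq_finrank
      (Subspace.dual_finrank_eq).symm).mp hinj
  obtain ⟨p, hp⟩ := hsurj f
  have hpf : ∀ x : L, f ⁅p, x⁆ = f x := fun x => by
    rw [← hTapp, hp]
  set A : L →ₗ[ℂ] L := LieAlgebra.ad ℂ L p with hA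
  -- the cocycle identity: T ∘ A + A* ∘ T = T
  have key : T ∘ₗ A + A.dualMap ∘ₗ T = T := by
    ext x y
    simp only [LinearMap.add_apply, LinearMap.comp_apply, LinearMap.dualMap_apply, hTapp]
    have : f ⁅⁅p, x⁆, y⁆ + f ⁅x, ⁅p, y⁆⁆ = f ⁅p, ⁅x, y⁆⁆ := by
      rw [← map_add]
      exact congrArg f (leibniz_lie p x y).symm
    simp only [hA, LieAlgebra.ad_apply]
    rw [this, hpf]
  -- turn `T` into an equivalence
  let e : L ≃ₗ[ℂ] Module.Dual ℂ L := LinearEquiv.ofBijective T ⟨hinj, hsurj⟩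
  have he : (e : L →ₗ[ℂ] Module.Dual ℂ L) = T := rfl
  -- A + e⁻¹ ∘ A* ∘ e = id
  have hx : ∀ y : L, e.symm (T y) = y := fun y => e.symm_apply_apply y
  have key2 : A + (e.symm : Module.Dual ℂ L →ₗ[ℂ] L) ∘ₗ A.dualMap ∘ₗ T = LinearMap.id := by
    ext x
    simp only [LinearMap.add_apply, LinearMap.comp_apply, LinearMap.coe_coe,
      LinearMap.id_coe, id_eq]
    have h1 : T (A x) + A.dualMap (T x) = T x := by
      have := congrArg (fun g => g x) key
      simpa using this
    have h2 := congrArg e.symm h1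
    rw [map_add, hx (A x), hx x] at h2
    exact h2
  -- take traces
  have htr := congrArg (LinearMap.trace ℂ L) key2
  rw [map_add, LinearMap.trace_id] at htr
  have htr2 : LinearMap.trace ℂ L ((e.symm : Module.Dual ℂ L →ₗ[ℂ] L) ∘ₗ A.dualMap ∘ₗ T) =
      LinearMap.trace ℂ L A := by
    have : (e.symm : Module.Dual ℂ L →ₗ[ℂ] L) ∘ₗ A.dualMap ∘ₗ T = e.symm.conj A.dualMap := by
      ext x; rfl
    rw [this, LinearMap.trace_conj', LinearMap.dualMap_def,
      LinearMap.trace_transpose']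
  rw [htr2, aux_trace_ad_eq_zero, add_zero] at htr
  have hn : 0 < Module.finrank ℂ L := Module.finrank_pos
  exact (Nat.cast_ne_zero.mpr hn.ne').symm (by exact_mod_cast htr)
end

section
/- Let F be a Drinfel'd twist on a Hopf algebra H and let (A, ·) be a left H-module algebra with action ▷. Define a ⋆ b = Σ (F₁⁻¹ ▷ a)·(F₂⁻¹ ▷ b). Then ⋆ is associative, has the same unit 1_A, and (A, ⋆) is a left module algebra over the twisted Hopf algebra H^F, i.e. ξ ▷ (a ⋆ b) = Σ (ξ^F_(1) ▷ a) ⋆ (ξ^F_(2) ▷ b) where Δ^F(ξ) = Σ ξ^F_(1) ⊗ ξ^F_(2). -/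
open scoped TensorProduct

set_option synthInstance.maxHeartbeats 1000000
set_option maxHeartbeats 1000000

/-- The extension of a bilinear action `act : H → End(A)` to `H ⊗ H` acting on `A ⊗ A`. -/
noncomputable def act2 {k H A : Type*} [CommRing k]
    [AddCommGroup H] [Module k H] [AddCommGroup A] [Module k A]
    (act : H →ₗ[k] (A →ₗ[k] A)) : H ⊗[k] H →ₗ[k] (A ⊗[k] A →ₗ[k] A ⊗[k] A) :=
  (TensorProduct.homTensorHomMap (RingHom.id k) A A A A) ∘ₗ (TensorProduct.map act act)

section Aux
variable {k : Type*} [CommRing k]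

/-- Extension of two actions to the tensor product. -/
noncomputable def actT {H₁ H₂ B₁ B₂ : Type*}
    [AddCommGroup H₁] [Module k H₁] [AddCommGroup H₂] [Module k H₂]
    [AddCommGroup B₁] [Module k B₁] [AddCommGroup B₂] [Module k B₂]
    (f : H₁ →ₗ[k] (B₁ →ₗ[k] B₁)) (g : H₂ →ₗ[k] (B₂ →ₗ[k] B₂)) :
    H₁ ⊗[k] H₂ →ₗ[k] (B₁ ⊗[k] B₂ →ₗ[k] B₁ ⊗[k] B₂) :=
  (TensorProduct.homTensorHomMap (RingHom.id k) B₁ B₂ B₁ B₂) ∘ₗ (TensorProduct.map f g)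

@[simp] lemma actT_tmul {H₁ H₂ B₁ B₂ : Type*}
    [AddCommGroup H₁] [Module k H₁] [AddCommGroup H₂] [Module k H₂]
    [AddCommGroup B₁] [Module k B₁] [AddCommGroup B₂] [Module k B₂]
    (f : H₁ →ₗ[k] (B₁ →ₗ[k] B₁)) (g : H₂ →ₗ[k] (B₂ →ₗ[k] B₂))
    (x : H₁) (y : H₂) :
    actT f g (x ⊗ₜ[k] y) = TensorProduct.map (f x) (g y) := by
  simp [actT, TensorProduct.homTensorHomMap_apply]

lemma actT_mul {H₁ H₂ B₁ B₂ : Type*}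
    [Ring H₁] [Algebra k H₁] [Ring H₂] [Algebra k H₂]
    [AddCommGroup B₁] [Module k B₁] [AddCommGroup B₂] [Module k B₂]
    (f : H₁ →ₗ[k] (B₁ →ₗ[k] B₁)) (g : H₂ →ₗ[k] (B₂ →ₗ[k] B₂))
    (hf : ∀ x y v, f (x * y) v = f x (f y v))
    (hg : ∀ x y v, g (x * y) v = g x (g y v))
    (X Y : H₁ ⊗[k] H₂) (v : B₁ ⊗[k] B₂) :
    actT f g (X * Y) v = actT f g X (actT f g Y v) := by
  induction X using TensorProduct.induction_on with
  | zero => simp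
  | add X₁ X₂ h1 h2 => simp [add_mul, h1, h2]
  | tmul x₁ x₂ =>
    induction Y using TensorProduct.induction_on with
    | zero => simp
    | add Y₁ Y₂ h1 h2 => simp [mul_add, h1, h2]
    | tmul y₁ y₂ =>
      induction v using TensorProduct.induction_on with
      | zero => simp
      | add v₁ v₂ h1 h2 => simp only [map_add, h1, h2]
      | tmul a b =>
        simp [Algebra.TensorProduct.tmul_mul_tmul, hf, hg]

lemma actT_one {H₁ H₂ B₁ B₂ : Type*}
    [Ring H₁] [Algebra k H₁] [Ring H₂] [Algebra k H₂]
    [AddCommGroup B₁] [Module k B₁] [AddCommGroup B₂] [Module k B₂]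
    (f : H₁ →ₗ[k] (B₁ →ₗ[k] B₁)) (g : H₂ →ₗ[k] (B₂ →ₗ[k] B₂))
    (hf : ∀ v, f 1 v = v) (hg : ∀ v, g 1 v = v)
    (v : B₁ ⊗[k] B₂) :
    actT f g 1 v = v := by
  rw [Algebra.TensorProduct.one_def]
  induction v using TensorProduct.induction_on with
  | zero => simp
  | add v₁ v₂ h1 h2 => simp only [map_add, h1, h2]
  | tmul a b => simp [hf, hg]

/-- `TensorProduct.map` of two multiplicative maps is multiplicative. -/
lemma tmap_mul {A A' B B' : Type*}
    [Ring A] [Algebra k A] [Ring A'] [Algebra k A']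
    [Ring B] [Algebra k B] [Ring B'] [Algebra k B']
    (f : A →ₗ[k] A') (g : B →ₗ[k] B')
    (hf : ∀ x y, f (x * y) = f x * f y) (hg : ∀ x y, g (x * y) = g x * g y)
    (X Y : A ⊗[k] B) :
    TensorProduct.map f g (X * Y) = TensorProduct.map f g X * TensorProduct.map f g Y := by
  induction X using TensorProduct.induction_on with
  | zero => simp
  | add X₁ X₂ h1 h2 => simp [add_mul, h1, h2]
  | tmul x₁ x₂ =>
    induction Y using TensorProduct.induction_on with
    | zero => simp
    | add Y₁ Y₂ h1 h2 => simp [mul_add, h1, h2]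
    | tmul y₁ y₂ =>
      simp [Algebra.TensorProduct.tmul_mul_tmul, hf, hg]

lemma tmap_one {A A' B B' : Type*}
    [Ring A] [Algebra k A] [Ring A'] [Algebra k A']
    [Ring B] [Algebra k B] [Ring B'] [Algebra k B']
    (f : A →ₗ[k] A') (g : B →ₗ[k] B')
    (hf : f 1 = 1) (hg : g 1 = 1) :
    TensorProduct.map f g (1 : A ⊗[k] B) = 1 := by
  rw [Algebra.TensorProduct.one_def, TensorProduct.map_tmul, hf, hg,
    Algebra.TensorProduct.one_def]

lemma tassoc_mul {A B C : Type*}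
    [Ring A] [Algebra k A] [Ring B] [Algebra k B] [Ring C] [Algebra k C]
    (X Y : (A ⊗[k] B) ⊗[k] C) :
    TensorProduct.assoc k A B C (X * Y) =
      TensorProduct.assoc k A B C X * TensorProduct.assoc k A B C Y := by
  induction X using TensorProduct.induction_on with
  | zero => simp only [zero_mul, map_zero]
  | add X₁ X₂ h1 h2 => simp only [add_mul, map_add, h1, h2]
  | tmul u c =>
    induction u using TensorProduct.induction_on with
    | zero => simp only [TensorProduct.zero_tmul, zero_mul, map_zero]
    | add u₁ u₂ h1 h2 =>
      simp only [TensorProduct.add_tmul, add_mul, map_add, h1, h2]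
    | tmul a b =>
      induction Y using TensorProduct.induction_on with
      | zero => simp only [mul_zero, map_zero]
      | add Y₁ Y₂ h1 h2 => simp only [mul_add, map_add, h1, h2]
      | tmul u' c' =>
        induction u' using TensorProduct.induction_on with
        | zero => simp only [TensorProduct.zero_tmul, mul_zero, map_zero]
        | add u₁ u₂ h1 h2 =>
          simp only [TensorProduct.add_tmul, mul_add, map_add, h1, h2]
        | tmul a' b' =>
          simp [Algebra.TensorProduct.tmul_mul_tmul, TensorProduct.assoc_tmul]

lemma tassoc_one {A B C : Type*}
    [Ring A] [Algebra k A] [Ring B] [Algebra k B] [Ring C] [Algebra k C] :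
    TensorProduct.assoc k A B C (1 : (A ⊗[k] B) ⊗[k] C) = 1 := by
  rw [show (1 : (A ⊗[k] B) ⊗[k] C) = ((1 : A) ⊗ₜ[k] (1 : B)) ⊗ₜ[k] (1 : C) by
      rw [Algebra.TensorProduct.one_def, Algebra.TensorProduct.one_def]]
  rw [TensorProduct.assoc_tmul, Algebra.TensorProduct.one_def, Algebra.TensorProduct.one_def]

end Aux

/-- Deforming the product of a left `H`-module algebra `A` by a Drinfel'd twist `F` on `H`,
via `a ⋆ b = Σ (F₁⁻¹ ▷ a)(F₂⁻¹ ▷ b)`, yields an associative product with the same unit,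
and `(A, ⋆)` is a left module algebra over the twisted Hopf algebra `H^F`:
`ξ ▷ (a ⋆ b) = Σ (ξ^F_(1) ▷ a) ⋆ (ξ^F_(2) ▷ b)` where `Δ^F(ξ) = F Δ(ξ) F⁻¹`. -/
theorem twisted_module_algebra
    {k : Type*} [Field k] {H : Type*} [Ring H] [HopfAlgebra k H]
    {A : Type*} [Ring A] [Algebra k A]
    (act : H →ₗ[k] (A →ₗ[k] A))
    (hact₁ : ∀ (ξ ζ : H) (a : A), act (ξ * ζ) a = act ξ (act ζ a))
    (hact₂ : ∀ a : A, act 1 a = a)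
    (hact₃ : ∀ (ξ : H) (a b : A),
      act ξ (a * b) =
        LinearMap.mul' k A ((act2 act) (Coalgebra.comul (R := k) (A := H) ξ) (a ⊗ₜ[k] b)))
    (hact₄ : ∀ ξ : H, act ξ (1 : A) = algebraMap k A (Coalgebra.counit (R := k) (A := H) ξ))
    (F Finv : H ⊗[k] H)
    (hinv₁ : F * Finv = 1) (hinv₂ : Finv * F = 1)
    (hcocycle :
      (TensorProduct.assoc k H H H) (F ⊗ₜ[k] (1 : H)) *
          (TensorProduct.assoc k H H H)
            ((TensorProduct.map (Coalgebra.comul (R := k) (A := H)) LinearMap.id) F) =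
        ((1 : H) ⊗ₜ[k] F) *
          (TensorProduct.map LinearMap.id (Coalgebra.comul (R := k) (A := H))) F)
    (hnorm₁ : (TensorProduct.lid k H)
        ((TensorProduct.map (Coalgebra.counit (R := k) (A := H)) LinearMap.id) F) = 1)
    (hnorm₂ : (TensorProduct.rid k H)
        ((TensorProduct.map LinearMap.id (Coalgebra.counit (R := k) (A := H))) F) = 1)
    (star : A → A → A)
    (hstar : ∀ a b : A, star a b = LinearMap.mul' k A ((act2 act) Finv (a ⊗ₜ[k] b))) :
    (∀ a b c : A, star (star a b) c = star a (star b c)) ∧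
    (∀ a : A, star a 1 = a ∧ star 1 a = a) ∧
    (∀ (ξ : H) (a b : A),
      act ξ (star a b) =
        LinearMap.mul' k A
          ((act2 act) Finv
            ((act2 act) (F * Coalgebra.comul (R := k) (A := H) ξ * Finv) (a ⊗ₜ[k] b)))) := by
  -- abbreviations
  have hact2eq : act2 act = actT act act := rfl
  have h2mul : ∀ (X Y : H ⊗[k] H) (v : A ⊗[k] A),
      act2 act (X * Y) v = act2 act X (act2 act Y v) := by
    rw [hact2eq]; exact actT_mul act act hact₁ hact₁
  have h2one : ∀ v : A ⊗[k] A, act2 act 1 v = v := by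
    rw [hact2eq]; exact actT_one act act hact₂ hact₂
  have h2tmul : ∀ (x y : H) (v : A ⊗[k] A),
      act2 act (x ⊗ₜ[k] y) v = TensorProduct.map (act x) (act y) v := by
    rw [hact2eq]; intro x y v; rw [actT_tmul]
  -- extension of hact₃ to all of A ⊗ A
  have hB : ∀ (ξ : H) (v : A ⊗[k] A),
      act ξ (LinearMap.mul' k A v) =
        LinearMap.mul' k A (act2 act (Coalgebra.comul (R := k) (A := H) ξ) v) := by
    intro ξ v
    induction v using TensorProduct.induction_on with
    | zero => simp
    | add v₁ v₂ h1 h2 => simp only [map_add, h1, h2]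
    | tmul a b => exact hact₃ ξ a b
  constructor
  · -- associativity
    intro a b c
    -- local notation
    set M : A ⊗[k] A →ₗ[k] A := LinearMap.mul' k A with hM
    set Δ : H →ₗ[k] H ⊗[k] H := Coalgebra.comul (R := k) (A := H) with hΔ
    have hLmul := actT_mul (k := k) (act2 act) act h2mul hact₁
    have hRmul := actT_mul (k := k) act (act2 act) hact₁ h2mul
    have claim1 : ∀ (x : H ⊗[k] H) (w : A ⊗[k] A) (c : A),
        act2 act x ((M w) ⊗ₜ[k] c) =
          TensorProduct.map M LinearMap.id
            (actT (act2 act) act (TensorProduct.map Δ LinearMap.id x) (w ⊗ₜ[k] c)) := by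
      intro x w c
      induction x using TensorProduct.induction_on with
      | zero => simp
      | add x₁ x₂ h1 h2 => simp only [map_add, LinearMap.add_apply, h1, h2]
      | tmul ξ ζ =>
        simp only [h2tmul, TensorProduct.map_tmul, actT_tmul, LinearMap.id_coe, id_eq, hB]
    have claim1' : ∀ (x : H ⊗[k] H) (c : A) (w : A ⊗[k] A),
        act2 act x (c ⊗ₜ[k] (M w)) =
          TensorProduct.map LinearMap.id M
            (actT act (act2 act) (TensorProduct.map LinearMap.id Δ x) (c ⊗ₜ[k] w)) := by
      intro x c w
      induction x using TensorProduct.induction_on with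
      | zero => simp
      | add x₁ x₂ h1 h2 => simp only [map_add, LinearMap.add_apply, h1, h2]
      | tmul ξ ζ =>
        simp only [h2tmul, TensorProduct.map_tmul, actT_tmul, LinearMap.id_coe, id_eq, hB]
    have claim3 : ∀ (X : (H ⊗[k] H) ⊗[k] H) (w : (A ⊗[k] A) ⊗[k] A),
        actT act (act2 act) (TensorProduct.assoc k H H H X) (TensorProduct.assoc k A A A w) =
          TensorProduct.assoc k A A A (actT (act2 act) act X w) := by
      intro X w
      induction X using TensorProduct.induction_on with
      | zero => simp
      | add X₁ X₂ h1 h2 => simp only [map_add, LinearMap.add_apply, h1, h2]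
      | tmul u h =>
        induction u using TensorProduct.induction_on with
        | zero => simp [TensorProduct.zero_tmul]
        | add u₁ u₂ h1 h2 =>
          simp only [TensorProduct.add_tmul, map_add, LinearMap.add_apply, h1, h2]
        | tmul ξ ζ =>
          induction w using TensorProduct.induction_on with
          | zero => simp
          | add w₁ w₂ h1 h2 => simp only [map_add, h1, h2]
          | tmul u' c' =>
            induction u' using TensorProduct.induction_on with
            | zero => simp [TensorProduct.zero_tmul]
            | add u₁ u₂ h1 h2 =>
              simp only [TensorProduct.add_tmul, map_add, h1, h2]
            | tmul a' b' =>
              simp [TensorProduct.assoc_tmul, h2tmul]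
    have claim4 : ∀ w : (A ⊗[k] A) ⊗[k] A,
        M (TensorProduct.map LinearMap.id M (TensorProduct.assoc k A A A w)) =
          M (TensorProduct.map M LinearMap.id w) := by
      intro w
      induction w using TensorProduct.induction_on with
      | zero => simp
      | add w₁ w₂ h1 h2 => simp only [map_add, h1, h2]
      | tmul u c' =>
        induction u using TensorProduct.induction_on with
        | zero => simp [TensorProduct.zero_tmul]
        | add u₁ u₂ h1 h2 => simp only [TensorProduct.add_tmul, map_add, h1, h2]
        | tmul a' b' =>
          simp [TensorProduct.assoc_tmul, hM, mul_assoc]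
    have hsmall1 : ∀ (x : H ⊗[k] H) (u : A ⊗[k] A) (c : A),
        actT (act2 act) act (x ⊗ₜ[k] (1 : H)) (u ⊗ₜ[k] c) = (act2 act x u) ⊗ₜ[k] c := by
      intro x u c
      simp [hact₂ c]
    have hsmall2 : ∀ (x : H ⊗[k] H) (c : A) (u : A ⊗[k] A),
        actT act (act2 act) ((1 : H) ⊗ₜ[k] x) (c ⊗ₜ[k] u) = c ⊗ₜ[k] (act2 act x u) := by
      intro x c u
      simp [hact₂ c]
    -- multiplicativity lemmas on the H side
    have hmcF : ∀ x y : H ⊗[k] H,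
        TensorProduct.map Δ LinearMap.id (x * y) =
          TensorProduct.map Δ LinearMap.id x * TensorProduct.map Δ LinearMap.id y :=
      tmap_mul Δ LinearMap.id (by intro x y; simp [hΔ]) (fun _ _ => rfl)
    have hcmF : ∀ x y : H ⊗[k] H,
        TensorProduct.map LinearMap.id Δ (x * y) =
          TensorProduct.map LinearMap.id Δ x * TensorProduct.map LinearMap.id Δ y :=
      tmap_mul LinearMap.id Δ (fun _ _ => rfl) (by intro x y; simp [hΔ])
    -- the inverse cocycle identity via units
    have huP : (TensorProduct.assoc k H H H) (F ⊗ₜ[k] (1 : H)) *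
        (TensorProduct.assoc k H H H) (Finv ⊗ₜ[k] (1 : H)) = 1 := by
      rw [← tassoc_mul, Algebra.TensorProduct.tmul_mul_tmul, hinv₁, one_mul,
        ← Algebra.TensorProduct.one_def, tassoc_one]
    have huP' : (TensorProduct.assoc k H H H) (Finv ⊗ₜ[k] (1 : H)) *
        (TensorProduct.assoc k H H H) (F ⊗ₜ[k] (1 : H)) = 1 := by
      rw [← tassoc_mul, Algebra.TensorProduct.tmul_mul_tmul, hinv₂, one_mul,
        ← Algebra.TensorProduct.one_def, tassoc_one]
    have hmc1 : TensorProduct.map Δ LinearMap.id (1 : H ⊗[k] H) = 1 :=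
      tmap_one Δ LinearMap.id (by simp [hΔ]) rfl
    have hcm1 : TensorProduct.map LinearMap.id Δ (1 : H ⊗[k] H) = 1 :=
      tmap_one LinearMap.id Δ rfl (by simp [hΔ])
    have huQ : (TensorProduct.assoc k H H H) (TensorProduct.map Δ LinearMap.id F) *
        (TensorProduct.assoc k H H H) (TensorProduct.map Δ LinearMap.id Finv) = 1 := by
      rw [← tassoc_mul, ← hmcF, hinv₁, hmc1, tassoc_one]
    have huQ' : (TensorProduct.assoc k H H H) (TensorProduct.map Δ LinearMap.id Finv) *
        (TensorProduct.assoc k H H H) (TensorProduct.map Δ LinearMap.id F) = 1 := by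
      rw [← tassoc_mul, ← hmcF, hinv₂, hmc1, tassoc_one]
    have huR : ((1 : H) ⊗ₜ[k] F) * ((1 : H) ⊗ₜ[k] Finv) = (1 : H ⊗[k] (H ⊗[k] H)) := by
      rw [Algebra.TensorProduct.tmul_mul_tmul, hinv₁, one_mul,
        ← Algebra.TensorProduct.one_def]
    have huR' : ((1 : H) ⊗ₜ[k] Finv) * ((1 : H) ⊗ₜ[k] F) = (1 : H ⊗[k] (H ⊗[k] H)) := by
      rw [Algebra.TensorProduct.tmul_mul_tmul, hinv₂, one_mul,
        ← Algebra.TensorProduct.one_def]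
    have huS : TensorProduct.map LinearMap.id Δ F * TensorProduct.map LinearMap.id Δ Finv = 1 := by
      rw [← hcmF, hinv₁, hcm1]
    have huS' : TensorProduct.map LinearMap.id Δ Finv * TensorProduct.map LinearMap.id Δ F = 1 := by
      rw [← hcmF, hinv₂, hcm1]
    have key : (TensorProduct.assoc k H H H) (TensorProduct.map Δ LinearMap.id Finv) *
        (TensorProduct.assoc k H H H) (Finv ⊗ₜ[k] (1 : H)) =
        TensorProduct.map LinearMap.id Δ Finv * ((1 : H) ⊗ₜ[k] Finv) := by
      let uP : (H ⊗[k] (H ⊗[k] H))ˣ :=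
        ⟨(TensorProduct.assoc k H H H) (F ⊗ₜ[k] (1 : H)),
         (TensorProduct.assoc k H H H) (Finv ⊗ₜ[k] (1 : H)), huP, huP'⟩
      let uQ : (H ⊗[k] (H ⊗[k] H))ˣ :=
        ⟨(TensorProduct.assoc k H H H) (TensorProduct.map Δ LinearMap.id F),
         (TensorProduct.assoc k H H H) (TensorProduct.map Δ LinearMap.id Finv), huQ, huQ'⟩
      let uR : (H ⊗[k] (H ⊗[k] H))ˣ := ⟨(1 : H) ⊗ₜ[k] F, (1 : H) ⊗ₜ[k] Finv, huR, huR'⟩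
      let uS : (H ⊗[k] (H ⊗[k] H))ˣ :=
        ⟨TensorProduct.map LinearMap.id Δ F, TensorProduct.map LinearMap.id Δ Finv, huS, huS'⟩
      have hPQ : uP * uQ = uR * uS := Units.ext hcocycle
      have := congrArg (fun u : (H ⊗[k] (H ⊗[k] H))ˣ => ((u⁻¹ : _ˣ) : H ⊗[k] (H ⊗[k] H))) hPQ
      simpa [mul_inv_rev, uP, uQ, uR, uS] using this
    -- now the chain of equalities
    rw [hstar (star a b) c, hstar a b, hstar a (star b c), hstar b c]
    calc
      M (act2 act Finv ((M (act2 act Finv (a ⊗ₜ[k] b))) ⊗ₜ[k] c))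
          = M (TensorProduct.map M LinearMap.id
              (actT (act2 act) act (TensorProduct.map Δ LinearMap.id Finv)
                ((act2 act Finv (a ⊗ₜ[k] b)) ⊗ₜ[k] c))) := by rw [claim1]
      _ = M (TensorProduct.map M LinearMap.id
              (actT (act2 act) act (TensorProduct.map Δ LinearMap.id Finv)
                (actT (act2 act) act (Finv ⊗ₜ[k] (1 : H)) ((a ⊗ₜ[k] b) ⊗ₜ[k] c)))) := by
            rw [hsmall1]
      _ = M (TensorProduct.map M LinearMap.id
              (actT (act2 act) act
                (TensorProduct.map Δ LinearMap.id Finv * (Finv ⊗ₜ[k] (1 : H)))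
                ((a ⊗ₜ[k] b) ⊗ₜ[k] c))) := by rw [hLmul]
      _ = M (TensorProduct.map LinearMap.id M (TensorProduct.assoc k A A A
              (actT (act2 act) act
                (TensorProduct.map Δ LinearMap.id Finv * (Finv ⊗ₜ[k] (1 : H)))
                ((a ⊗ₜ[k] b) ⊗ₜ[k] c)))) := (claim4 _).symm
      _ = M (TensorProduct.map LinearMap.id M
              (actT act (act2 act)
                ((TensorProduct.assoc k H H H)
                  (TensorProduct.map Δ LinearMap.id Finv * (Finv ⊗ₜ[k] (1 : H))))
                ((TensorProduct.assoc k A A A) ((a ⊗ₜ[k] b) ⊗ₜ[k] c)))) := by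
            rw [claim3]
      _ = M (TensorProduct.map LinearMap.id M
              (actT act (act2 act)
                (TensorProduct.map LinearMap.id Δ Finv * ((1 : H) ⊗ₜ[k] Finv))
                (a ⊗ₜ[k] (b ⊗ₜ[k] c)))) := by
            rw [tassoc_mul, key, TensorProduct.assoc_tmul]
      _ = M (TensorProduct.map LinearMap.id M
              (actT act (act2 act) (TensorProduct.map LinearMap.id Δ Finv)
                (actT act (act2 act) ((1 : H) ⊗ₜ[k] Finv) (a ⊗ₜ[k] (b ⊗ₜ[k] c))))) := by
            rw [hRmul]
      _ = M (TensorProduct.map LinearMap.id M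
              (actT act (act2 act) (TensorProduct.map LinearMap.id Δ Finv)
                (a ⊗ₜ[k] (act2 act Finv (b ⊗ₜ[k] c))))) := by rw [hsmall2]
      _ = M (act2 act Finv (a ⊗ₜ[k] (M (act2 act Finv (b ⊗ₜ[k] c))))) := by rw [claim1']
  constructor
  · -- units
    intro a
    have hφmul : ∀ x y : H ⊗[k] H,
        (TensorProduct.rid k H)
            ((TensorProduct.map LinearMap.id (Coalgebra.counit (R := k) (A := H))) (x * y)) =
          (TensorProduct.rid k H)
              ((TensorProduct.map LinearMap.id (Coalgebra.counit (R := k) (A := H))) x) *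
            (TensorProduct.rid k H)
              ((TensorProduct.map LinearMap.id (Coalgebra.counit (R := k) (A := H))) y) := by
      intro x y
      induction x using TensorProduct.induction_on with
      | zero => simp
      | add x₁ x₂ h1 h2 => simp [add_mul, h1, h2]
      | tmul ξ ζ =>
        induction y using TensorProduct.induction_on with
        | zero => simp
        | add y₁ y₂ h1 h2 => simp [mul_add, h1, h2]
        | tmul ξ' ζ' =>
          simp [Algebra.TensorProduct.tmul_mul_tmul, TensorProduct.rid_tmul,
            smul_mul_assoc, mul_smul_comm, smul_smul, mul_comm]
    have hψmul : ∀ x y : H ⊗[k] H,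
        (TensorProduct.lid k H)
            ((TensorProduct.map (Coalgebra.counit (R := k) (A := H)) LinearMap.id) (x * y)) =
          (TensorProduct.lid k H)
              ((TensorProduct.map (Coalgebra.counit (R := k) (A := H)) LinearMap.id) x) *
            (TensorProduct.lid k H)
              ((TensorProduct.map (Coalgebra.counit (R := k) (A := H)) LinearMap.id) y) := by
      intro x y
      induction x using TensorProduct.induction_on with
      | zero => simp
      | add x₁ x₂ h1 h2 => simp [add_mul, h1, h2]
      | tmul ξ ζ =>
        induction y using TensorProduct.induction_on with
        | zero => simp
        | add y₁ y₂ h1 h2 => simp [mul_add, h1, h2]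
        | tmul ξ' ζ' =>
          simp [Algebra.TensorProduct.tmul_mul_tmul, TensorProduct.lid_tmul,
            smul_mul_assoc, mul_smul_comm, smul_smul, mul_comm]
    have hφ1 : (TensorProduct.rid k H)
        ((TensorProduct.map LinearMap.id (Coalgebra.counit (R := k) (A := H)))
          (1 : H ⊗[k] H)) = 1 := by
      rw [Algebra.TensorProduct.one_def]
      simp
    have hψ1 : (TensorProduct.lid k H)
        ((TensorProduct.map (Coalgebra.counit (R := k) (A := H)) LinearMap.id)
          (1 : H ⊗[k] H)) = 1 := by
      rw [Algebra.TensorProduct.one_def]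
      simp
    have hφFinv : (TensorProduct.rid k H)
        ((TensorProduct.map LinearMap.id (Coalgebra.counit (R := k) (A := H))) Finv) = 1 := by
      have h := hφmul Finv F
      rw [hinv₂, hφ1, hnorm₂, mul_one] at h
      exact h.symm
    have hψFinv : (TensorProduct.lid k H)
        ((TensorProduct.map (Coalgebra.counit (R := k) (A := H)) LinearMap.id) Finv) = 1 := by
      have h := hψmul Finv F
      rw [hinv₂, hψ1, hnorm₁, mul_one] at h
      exact h.symm
    constructor
    · have key1 : ∀ x : H ⊗[k] H,
          LinearMap.mul' k A (act2 act x (a ⊗ₜ[k] (1 : A))) =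
            act ((TensorProduct.rid k H)
              ((TensorProduct.map LinearMap.id (Coalgebra.counit (R := k) (A := H))) x)) a := by
        intro x
        induction x using TensorProduct.induction_on with
        | zero => simp
        | add x₁ x₂ h1 h2 => simp only [map_add, LinearMap.add_apply, h1, h2]
        | tmul ξ ζ =>
          simp only [h2tmul, TensorProduct.map_tmul, LinearMap.id_coe, id_eq,
            LinearMap.mul'_apply, TensorProduct.rid_tmul, map_smul, LinearMap.smul_apply]
          rw [hact₄, Algebra.smul_def, Algebra.commutes]
      rw [hstar, key1, hφFinv, hact₂]
    · have key2 : ∀ x : H ⊗[k] H,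
          LinearMap.mul' k A (act2 act x ((1 : A) ⊗ₜ[k] a)) =
            act ((TensorProduct.lid k H)
              ((TensorProduct.map (Coalgebra.counit (R := k) (A := H)) LinearMap.id) x)) a := by
        intro x
        induction x using TensorProduct.induction_on with
        | zero => simp
        | add x₁ x₂ h1 h2 => simp only [map_add, LinearMap.add_apply, h1, h2]
        | tmul ξ ζ =>
          simp only [h2tmul, TensorProduct.map_tmul, LinearMap.id_coe, id_eq,
            LinearMap.mul'_apply, TensorProduct.lid_tmul, map_smul, LinearMap.smul_apply]
          rw [hact₄, Algebra.smul_def]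
      rw [hstar, key2, hψFinv, hact₂]
  · -- module algebra over the twisted Hopf algebra
    intro ξ a b
    rw [hstar, hB, ← h2mul, ← h2mul,
      show Finv * (F * Coalgebra.comul (R := k) (A := H) ξ * Finv) =
        Coalgebra.comul (R := k) (A := H) ξ * Finv by
          rw [← mul_assoc, ← mul_assoc, hinv₂, one_mul]]
end
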